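/- Let n ≥ 1 and let f be in 𝒜_n with Re(f(z)/z) > 0 for all z ∈ 𝔻 with z ≠ 0 (i.e. f ∈ S_n). Then for every z with 0 < |z| < R, where R := (arcsinh(1)/(n + √(n² + (arcsinh(1))²)))^(1/n) and arcsinh(1) = Real.arsinh 1, one has f(z) ≠ 0 and z·f'(z)/f(z) ∈ Ω_ρ. -/

import Mathlib

open Complex Metric Function Finset

/-- Principal branch of the complex inverse hyperbolic sine. -/
noncomputable def carcsinh (z : ℂ) : ℂ := Complex.log (z + (1 + z ^ 2) ^ ((1 : ℂ) / 2))

/-- The function `ρ(z) = 1 + arcsinh z`. -/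
noncomputable def ρ (z : ℂ) : ℂ := 1 + carcsinh z

/-- The open unit disk in `ℂ`. -/
def unitDisk : Set ℂ := {z : ℂ | ‖z‖ < 1}

/-- The petal-shaped domain `Ω_ρ = ρ '' 𝔻`. -/
noncomputable def OmegaRho : Set ℂ := ρ '' unitDisk

/-- The class `𝒜_n`: analytic normalized functions `f(z) = z + a_{n+1} z^{n+1} + ⋯`. -/
def classA (n : ℕ) (f : ℂ → ℂ) : Prop :=
  AnalyticOnNhd ℂ f unitDisk ∧ f 0 = 0 ∧ deriv f 0 = 1 ∧
    ∀ k : ℕ, 2 ≤ k → k ≤ n → iteratedDeriv k f 0 = 0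

lemma arsinh_one_lt_one : Real.arsinh 1 < 1 := by
  have h : (1:ℝ) < Real.sinh 1 := Real.self_lt_sinh_iff.mpr one_pos
  have := Real.arsinh_strictMono h
  rwa [Real.arsinh_sinh] at this

lemma arsinh_one_pos : 0 < Real.arsinh 1 := by
  have := Real.arsinh_strictMono (show (0:ℝ) < 1 by norm_num)
  rwa [Real.arsinh_zero] at this

/-- `|sinh w| ≤ sinh |w|`. -/
lemma abs_sinh_le (w : ℂ) : ‖Complex.sinh w‖ ≤ Real.sinh (‖w‖) := by
  have hs := Complex.hasSum_sinh w
  have hr := Real.hasSum_sinh (‖w‖)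
  rw [← hs.tsum_eq]
  have hnorm : ∀ k : ℕ, ‖w ^ (2 * k + 1) / ((Nat.factorial (2*k+1) : ℂ))‖
      = ‖w‖ ^ (2 * k + 1) / ((Nat.factorial (2*k+1) : ℝ)) := by
    intro k
    simp [norm_div, norm_pow, Complex.norm_natCast]
  calc ‖∑' k : ℕ, w ^ (2 * k + 1) / ((Nat.factorial (2*k+1) : ℂ))‖
      ≤ ∑' k : ℕ, ‖w ^ (2 * k + 1) / ((Nat.factorial (2*k+1) : ℂ))‖ := by
        apply norm_tsum_le_tsum_norm
        simpa only [hnorm] using hr.summable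
    _ = ∑' k : ℕ, ‖w‖ ^ (2 * k + 1) / ((Nat.factorial (2*k+1) : ℝ)) := by
        simp only [hnorm]
    _ = Real.sinh (‖w‖) := hr.tsum_eq

/-- square root of a square with positive real part -/
lemma cpow_half_of_sq {u : ℂ} (hu : 0 < u.re) : (u ^ 2) ^ ((1 : ℂ)/2) = u := by
  have hu0 : u ≠ 0 := fun h => by simp [h] at hu
  have hsq : u ^ 2 ≠ 0 := pow_ne_zero _ hu0
  set v := (u ^ 2) ^ ((1 : ℂ)/2) with hv
  have hvdef : v = Complex.exp ((1/2 : ℂ) * Complex.log (u ^ 2)) := by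
    rw [hv, Complex.cpow_def_of_ne_zero hsq, mul_comm]
  have hv2 : v ^ 2 = u ^ 2 := by
    rw [hvdef, ← Complex.exp_nat_mul]
    have : (2 : ℂ) * ((1/2 : ℂ) * Complex.log (u ^ 2)) = Complex.log (u ^ 2) := by ring
    rw [show ((2:ℕ) : ℂ) = (2 : ℂ) by norm_num, this, Complex.exp_log hsq]
  have hvre : 0 ≤ v.re := by
    rw [hvdef, Complex.exp_re]
    have him : ((1/2 : ℂ) * Complex.log (u ^ 2)).im = (Complex.log (u ^ 2)).im / 2 := by
      simp [Complex.mul_im]; ring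
    rw [him, Complex.log_im]
    have h1 : -(Real.pi/2) ≤ Complex.arg (u ^ 2) / 2 := by
      have := Complex.neg_pi_lt_arg (u ^ 2); linarith
    have h2 : Complex.arg (u ^ 2) / 2 ≤ Real.pi/2 := by
      have := Complex.arg_le_pi (u ^ 2); linarith
    have := Real.cos_nonneg_of_mem_Icc ⟨h1, h2⟩
    positivity
  have : (v - u) * (v + u) = 0 := by ring_nf; rw [show v ^ 2 = u ^ 2 from hv2]; ring
  rcases mul_eq_zero.mp this with h | h
  · exact sub_eq_zero.mp h
  · exfalso
    have : v = -u := by linear_combination h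
    rw [this] at hvre
    simp only [Complex.neg_re] at hvre
    linarith

lemma mem_OmegaRho_of_abs_lt {w : ℂ} (hw : ‖w‖ < Real.arsinh 1) : 1 + w ∈ OmegaRho := by
  set z := Complex.sinh w with hz
  have habs : ‖z‖ < 1 := by
    calc ‖z‖ ≤ Real.sinh (‖w‖) := abs_sinh_le w
    _ < Real.sinh (Real.arsinh 1) := Real.sinh_lt_sinh.mpr hw
    _ = 1 := Real.sinh_arsinh 1
  have him : |w.im| < 1 := lt_of_le_of_lt (Complex.abs_im_le_norm w)
      (lt_trans hw arsinh_one_lt_one)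
  have hpi : (1:ℝ) < Real.pi / 2 := by
    have := Real.pi_gt_three; linarith
  refine ⟨z, habs, ?_⟩
  have hcosh : 0 < (Complex.cosh w).re := by
    rw [show Complex.cosh w = (Complex.exp w + Complex.exp (-w)) / 2 from rfl]
    simp only [Complex.div_re, Complex.add_re, Complex.exp_re, Complex.neg_re, Complex.neg_im]
    have hcos : 0 < Real.cos w.im := by
      apply Real.cos_pos_of_mem_Ioo
      constructor <;> [linarith [abs_lt.mp him]; linarith [abs_lt.mp him]]
    have h1 : 0 < Real.exp w.re * Real.cos w.im + Real.exp (-w.re) * Real.cos (-w.im) := by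
      rw [Real.cos_neg]
      positivity
    simp only [Complex.normSq_ofNat]
    have h2 : ((2:ℂ)).re = 2 := by norm_num
    have h3 : ((2:ℂ)).im = 0 := by norm_num
    rw [h2, h3]
    ring_nf
    nlinarith [h1]
  have hsq : 1 + z ^ 2 = Complex.cosh w ^ 2 := by
    rw [hz, Complex.cosh_sq]; ring
  have : carcsinh z = w := by
    rw [carcsinh, hsq, cpow_half_of_sq hcosh, hz, Complex.sinh_add_cosh]
    exact Complex.log_exp (by linarith [abs_lt.mp him]) (by linarith [abs_lt.mp him])
  rw [ρ, this]



lemma sum_odd_pow_facts (n : ℕ) (hn : 1 ≤ n) (r : ℝ) (hr0 : 0 ≤ r) (hr1 : r < 1) :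
    (∑ k ∈ range n, r ^ (2*k+1)) * (1 - r^2) = r * (1 - r^(2*n)) ∧
    (∑ k ∈ range n, r ^ (2*k+1)) ≤ n ∧
    2 * (∑ k ∈ range n, r ^ (2*k+1)) ≤ n * (1 + r^(2*n)) := by
  set A := ∑ k ∈ range n, r ^ (2*k+1) with hA
  have hterm : ∀ k, r ^ (2*k+1) = (r^2)^k * r := by
    intro k; rw [pow_add, pow_mul, pow_one]
  have h1 : A * (1 - r^2) = r * (1 - r^(2*n)) := by
    have hg := geom_sum_mul (r^2) n
    have : A = (∑ k ∈ range n, (r^2)^k) * r := by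
      rw [hA, Finset.sum_mul]; exact Finset.sum_congr rfl fun k _ => hterm k
    rw [this, pow_mul]
    nlinarith [hg]
  have hple : ∀ k : ℕ, r ^ k ≤ 1 := fun k => pow_le_one₀ hr0 hr1.le
  have h2 : A ≤ n := by
    calc A ≤ ∑ _k ∈ range n, (1:ℝ) := Finset.sum_le_sum fun k _ => hple _
    _ = n := by simp
  have h3 : 2 * A ≤ n * (1 + r^(2*n)) := by
    have hrefl : A = ∑ k ∈ range n, r ^ (2*(n-1-k)+1) := by
      rw [hA, ← Finset.sum_range_reflect (fun k => r ^ (2*k+1)) n]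
    have : 2 * A = ∑ k ∈ range n, (r ^ (2*k+1) + r ^ (2*(n-1-k)+1)) := by
      rw [Finset.sum_add_distrib, ← hA, ← hrefl]; ring
    rw [this]
    calc ∑ k ∈ range n, (r ^ (2*k+1) + r ^ (2*(n-1-k)+1))
        ≤ ∑ _k ∈ range n, (1 + r^(2*n)) := by
          apply Finset.sum_le_sum
          intro k hk
          have hk' : k < n := Finset.mem_range.mp hk
          have hprod : r ^ (2*k+1) * r ^ (2*(n-1-k)+1) = r^(2*n) := by
            rw [← pow_add]; congr 1; omega
          nlinarith [hple (2*k+1), hple (2*(n-1-k)+1), pow_nonneg hr0 (2*k+1),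
            pow_nonneg hr0 (2*(n-1-k)+1), mul_nonneg (pow_nonneg hr0 (2*k+1)) (pow_nonneg hr0 (2*(n-1-k)+1))]
      _ = n * (1 + r^(2*n)) := by rw [Finset.sum_const]; simp [mul_comm]; ring
  exact ⟨h1, h2, h3⟩

lemma real_bound (n : ℕ) (hn : 1 ≤ n) (r t u : ℝ) (hr0 : 0 < r) (hr1 : r < 1)
    (ht0 : 0 ≤ t) (ht1 : t ≤ 1) (hu0 : 0 ≤ u) (hu : u * (1 - r^2) ≤ 1 - t^2) :
    2 * r^n * ((n:ℝ) * t + r * u) / (1 - r^(2*n) * t^2) ≤ 2 * n * r^n / (1 - r^(2*n)) := by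
  obtain ⟨h1, h2, h3⟩ := sum_odd_pow_facts n hn r hr0.le hr1
  set A := ∑ k ∈ range n, r ^ (2*k+1) with hA
  have hA0 : 0 ≤ A := Finset.sum_nonneg fun k _ => pow_nonneg hr0.le _
  have hr2n : r^(2*n) < 1 := pow_lt_one₀ hr0.le hr1 (by omega)
  have hr2n0 : 0 ≤ r^(2*n) := pow_nonneg hr0.le _
  have hd1 : 0 < 1 - r^(2*n) := by linarith
  have ht2 : t^2 ≤ 1 := by nlinarith
  have hd2 : 0 < 1 - r^(2*n) * t^2 := by nlinarith [mul_le_of_le_one_right hr2n0 ht2]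
  rw [div_le_div_iff₀ hd2 hd1]
  have hrn : 0 < r^n := pow_pos hr0 n
  -- reduce to (n t + r u)(1 - r^(2n)) ≤ n (1 - r^(2n) t²)
  have key : ((n:ℝ) * t + r * u) * (1 - r^(2*n)) ≤ n * (1 - r^(2*n) * t^2) := by
    have hru : r * u * (1 - r^(2*n)) ≤ A * (1 - t^2) := by
      have := mul_le_mul_of_nonneg_left hu hA0
      nlinarith [h1]
    have hq1 : 0 ≤ (1-t) * (1-t) * ((n:ℝ) - A) := by
      have h4 := sub_nonneg.mpr ht1
      exact mul_nonneg (mul_nonneg h4 h4) (by linarith)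
    have hq2 : 0 ≤ (1-t) * t * ((n:ℝ) * (1 + r^(2*n)) - 2*A) := by
      have h4 := sub_nonneg.mpr ht1
      have h5 : 0 ≤ (n:ℝ) * (1 + r^(2*n)) - 2*A := by linarith
      exact mul_nonneg (mul_nonneg h4 ht0) h5
    nlinarith [hq1, hq2, hru]
  nlinarith [key, hrn]

lemma radius_bound (n : ℕ) (hn : 1 ≤ n) (r : ℝ) (hr0 : 0 < r)
    (hr : r < (Real.arsinh 1 / ((n : ℝ) + Real.sqrt ((n : ℝ) ^ 2 + Real.arsinh 1 ^ 2))) ^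
      ((1 : ℝ) / (n : ℝ))) :
    r < 1 ∧ 2 * n * r^n / (1 - r^(2*n)) < Real.arsinh 1 := by
  set c := Real.arsinh 1 with hc
  have hc0 : 0 < c := by
    have := Real.arsinh_strictMono (show (0:ℝ) < 1 by norm_num)
    rwa [Real.arsinh_zero] at this
  set D := Real.sqrt ((n : ℝ) ^ 2 + c ^ 2) with hD
  have hDsq : D^2 = (n:ℝ)^2 + c^2 := Real.sq_sqrt (by positivity)
  have hD0 : 0 < D := Real.sqrt_pos.mpr (by positivity)
  have hn0 : (0:ℝ) < n := by exact_mod_cast hn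
  have hnD : 0 < (n:ℝ) + D := by linarith
  set S := c / ((n:ℝ) + D) with hS
  have hS0 : 0 < S := div_pos hc0 hnD
  have hS1 : S < 1 := by
    rw [hS, div_lt_one hnD]
    nlinarith [hDsq, hD0]
  have hkey : c * S^2 + 2 * n * S = c := by
    rw [hS]
    field_simp
    linear_combination (-1 : ℝ) * hDsq
  -- r^n < S
  have hrn : r^n < S := by
    have h1 : r ^ (n:ℝ) < (S ^ ((1:ℝ)/(n:ℝ))) ^ (n:ℝ) :=
      Real.rpow_lt_rpow hr0.le hr (by positivity)
    rw [← Real.rpow_natCast r n]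
    rwa [← Real.rpow_mul hS0.le, one_div, inv_mul_cancel₀ (by positivity : ((n:ℝ)) ≠ 0),
      Real.rpow_one] at h1
  have hr1 : r < 1 := by
    by_contra h
    push_neg at h
    have : (1:ℝ) ≤ r^n := one_le_pow₀ h
    linarith
  refine ⟨hr1, ?_⟩
  have hs0 : 0 < r^n := pow_pos hr0 n
  have hs1 : r^n < 1 := lt_trans hrn hS1
  have h2n : r^(2*n) = (r^n)^2 := by rw [← pow_mul, mul_comm]
  have hd : 0 < 1 - r^(2*n) := by rw [h2n]; nlinarith
  rw [div_lt_iff₀ hd, h2n]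
  nlinarith [hkey, mul_lt_mul_of_pos_left hrn (show (0:ℝ) < 2*n by positivity),
    mul_lt_mul_of_pos_left (mul_lt_mul' hrn.le hrn hs0.le hS0) hc0]

lemma unitDisk_eq : unitDisk = Metric.ball (0:ℂ) 1 := by
  ext z; simp [unitDisk, Metric.mem_ball, Complex.dist_eq]

lemma isOpen_unitDisk : IsOpen unitDisk := unitDisk_eq ▸ Metric.isOpen_ball

lemma zero_mem_unitDisk : (0:ℂ) ∈ unitDisk := by simp [unitDisk]

/-- Key Möbius identity. -/
lemma normSq_mobius (a z : ℂ) :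
    Complex.normSq (1 + (starRingEnd ℂ) a * z) - Complex.normSq (z + a)
      = (1 - Complex.normSq a) * (1 - Complex.normSq z) := by
  simp only [Complex.normSq_apply, Complex.add_re, Complex.add_im, Complex.mul_re,
    Complex.mul_im, Complex.one_re, Complex.one_im, Complex.conj_re, Complex.conj_im]
  ring

lemma abs_lt_abs_of_normSq (u v : ℂ) (h : Complex.normSq u < Complex.normSq v) :
    ‖u‖ < ‖v‖ := by
  rw [Complex.norm_def, Complex.norm_def]
  exact Real.sqrt_lt_sqrt (Complex.normSq_nonneg u) h

lemma mobius_mapsTo {a z : ℂ} (ha : ‖a‖ < 1) (hz : ‖z‖ < 1) :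
    (1 + (starRingEnd ℂ) a * z) ≠ 0 ∧
      ‖(z + a) / (1 + (starRingEnd ℂ) a * z)‖ < 1 := by
  have hna : Complex.normSq a < 1 := by
    rw [← Complex.sq_norm]; nlinarith [norm_nonneg a]
  have hnz : Complex.normSq z < 1 := by
    rw [← Complex.sq_norm]; nlinarith [norm_nonneg z]
  have hid := normSq_mobius a z
  have hpos : 0 < (1 - Complex.normSq a) * (1 - Complex.normSq z) := by nlinarith
  have hden : Complex.normSq (z + a) < Complex.normSq (1 + (starRingEnd ℂ) a * z) := by
    nlinarith [Complex.normSq_nonneg (z + a)]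
  have hdenpos : 0 < Complex.normSq (1 + (starRingEnd ℂ) a * z) := by
    nlinarith [Complex.normSq_nonneg (z + a)]
  have hne : (1 + (starRingEnd ℂ) a * z) ≠ 0 := by
    intro h; rw [h] at hdenpos; simp at hdenpos
  refine ⟨hne, ?_⟩
  rw [norm_div, div_lt_one (by
    have := abs_lt_abs_of_normSq 0 _ (by simpa using hdenpos)
    simpa using this)]
  exact abs_lt_abs_of_normSq _ _ hden

/-- Maximum-modulus bound: if `z^n ψ z` maps the disk into the disk
then `|ψ| ≤ 1` on the disk. -/
lemma psi_le_one {n : ℕ} {ψ : ℂ → ℂ} (hψ : AnalyticOnNhd ℂ ψ unitDisk)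
    (hlt : ∀ z ∈ unitDisk, ‖z ^ n * ψ z‖ < 1) {a : ℂ} (ha : a ∈ unitDisk) :
    ‖ψ a‖ ≤ 1 := by
  have key : ∀ r : ℝ, ‖a‖ < r → r < 1 → ‖ψ a‖ ≤ 1 / r ^ n := by
    intro r har hr1
    have hr0 : 0 < r := lt_of_le_of_lt (norm_nonneg a) har
    have hsub : closedBall (0:ℂ) r ⊆ unitDisk := by
      intro w hw
      rw [mem_closedBall, Complex.dist_eq, sub_zero] at hw
      exact lt_of_le_of_lt hw (by simpa [unitDisk] using hr1)
    have hsub' : ball (0:ℂ) r ⊆ unitDisk := ball_subset_closedBall.trans hsub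
    have hd : DiffContOnCl ℂ ψ (ball 0 r) := by
      constructor
      · exact (hψ.differentiableOn).mono hsub'
      · rw [closure_ball (0:ℂ) (ne_of_gt hr0)]
        exact (hψ.continuousOn).mono hsub
    have hfr : ∀ w ∈ frontier (ball (0:ℂ) r), ‖ψ w‖ ≤ 1 / r ^ n := by
      intro w hw
      rw [frontier_ball (0:ℂ) (ne_of_gt hr0)] at hw
      have hwa : ‖w‖ = r := by
        rw [mem_sphere, Complex.dist_eq, sub_zero] at hw; exact hw
      have hwd : w ∈ unitDisk := by simp [unitDisk, hwa, hr1]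
      have h1 := hlt w hwd
      rw [norm_mul, norm_pow, hwa] at h1
      rw [le_div_iff₀ (by positivity)]
      linarith [h1]
    have hcl : a ∈ closure (ball (0:ℂ) r) := by
      rw [closure_ball (0:ℂ) (ne_of_gt hr0), mem_closedBall, Complex.dist_eq, sub_zero]
      exact har.le
    have := Complex.norm_le_of_forall_mem_frontier_norm_le isBounded_ball hd hfr hcl
    simpa using this
  have h1 : Filter.Tendsto (fun r : ℝ => 1 / r ^ n) (nhdsWithin 1 (Set.Iio 1)) (nhds 1) := by
    have hc : ContinuousAt (fun r : ℝ => 1 / r ^ n) 1 := by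
      apply ContinuousAt.div continuousAt_const (by fun_prop)
      norm_num
    have := hc.tendsto.mono_left (nhdsWithin_le_nhds (s := Set.Iio (1:ℝ)))
    simpa using this
  have heventually : ∀ᶠ r in nhdsWithin 1 (Set.Iio (1:ℝ)), ‖ψ a‖ ≤ 1 / r ^ n := by
    have hmem : Set.Ioo (‖a‖) 1 ∈ nhdsWithin (1:ℝ) (Set.Iio 1) :=
      Ioo_mem_nhdsLT_of_mem (by constructor <;> simp [ha.out, le_refl] <;> exact ha.out)
    filter_upwards [hmem] with r hr
    exact key r hr.1 hr.2
  exact ge_of_tendsto h1 heventually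

/-- Schwarz–Pick inequality on the unit disk. -/
lemma schwarz_pick {ψ : ℂ → ℂ} (hψ : AnalyticOnNhd ℂ ψ unitDisk)
    (hb : ∀ z ∈ unitDisk, ‖ψ z‖ ≤ 1) {a : ℂ} (ha : a ∈ unitDisk) :
    ‖deriv ψ a‖ * (1 - ‖a‖ ^ 2) ≤ 1 - ‖ψ a‖ ^ 2 := by
  by_cases hmax : ∃ z₀ ∈ unitDisk, 1 ≤ ‖ψ z₀‖
  · obtain ⟨z₀, hz₀, hz₀1⟩ := hmax
    have hm : IsMaxOn (norm ∘ ψ) unitDisk z₀ := by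
      intro w hw
      simp only [Function.comp_apply, Set.mem_setOf_eq]
      exact le_trans (hb w hw) hz₀1
    have heq := Complex.eqOn_of_isPreconnected_of_isMaxOn_norm
      (unitDisk_eq ▸ (convex_ball (0:ℂ) 1).isPreconnected) isOpen_unitDisk
      hψ.differentiableOn hz₀ hm
    have hderiv : deriv ψ a = 0 := by
      have hev : ψ =ᶠ[nhds a] fun _ => ψ z₀ :=
        Filter.eventuallyEq_of_mem (isOpen_unitDisk.mem_nhds ha) heq
      rw [hev.deriv_eq, deriv_const]
    rw [hderiv]
    simp only [norm_zero, zero_mul]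
    have := hb a ha
    nlinarith [norm_nonneg (ψ a)]
  · push_neg at hmax
    -- |ψ| < 1 everywhere
    set b := ψ a with hbdef
    have hb1 : ‖b‖ < 1 := hmax a ha
    have ha1 : ‖a‖ < 1 := ha
    set M : ℂ → ℂ := fun z => (z + a) / (1 + (starRingEnd ℂ) a * z) with hM
    set N : ℂ → ℂ := fun w => (w - b) / (1 - (starRingEnd ℂ) b * w) with hN
    set g : ℂ → ℂ := fun z => N (ψ (M z)) with hg
    have hMmaps : ∀ z ∈ ball (0:ℂ) 1, M z ∈ ball (0:ℂ) 1 := by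
      intro z hz
      rw [mem_ball, Complex.dist_eq, sub_zero] at hz ⊢
      exact (mobius_mapsTo ha1 hz).2
    have hNden : ∀ w : ℂ, ‖w‖ ≤ 1 → (1 - (starRingEnd ℂ) b * w) ≠ 0 := by
      intro w hw hzero
      have : ‖(starRingEnd ℂ) b * w‖ < 1 := by
        rw [norm_mul, Complex.norm_conj]
        calc ‖b‖ * ‖w‖ ≤ ‖b‖ * 1 :=
          mul_le_mul_of_nonneg_left hw (norm_nonneg b)
        _ < 1 := by simpa using hb1
      rw [sub_eq_zero] at hzero
      rw [← hzero] at this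
      simp at this
    have hNmaps : ∀ w : ℂ, ‖w‖ < 1 → ‖N w‖ < 1 := by
      intro w hw
      have h2 := mobius_mapsTo (a := -b) (z := w) (by simpa using hb1) hw
      simp only [map_neg, neg_mul] at h2
      rw [hN]
      simp only []
      have : w - b = w + -b := by ring
      rw [this, show (1 : ℂ) - (starRingEnd ℂ) b * w = 1 + -((starRingEnd ℂ) b * w) by ring]
      exact h2.2
    have hdg : DifferentiableOn ℂ g (ball 0 1) := by
      intro z hz
      apply DifferentiableAt.differentiableWithinAt
      have hMd : DifferentiableAt ℂ M z := by
        apply DifferentiableAt.div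
        · fun_prop
        · fun_prop
        · exact (mobius_mapsTo ha1 (by rw [mem_ball, Complex.dist_eq, sub_zero] at hz; exact hz)).1
      have hMz : M z ∈ unitDisk := by
        have := hMmaps z hz
        rw [mem_ball, Complex.dist_eq, sub_zero] at this
        exact this
      have hψd : DifferentiableAt ℂ ψ (M z) := (hψ (M z) hMz).differentiableAt
      have hNd : DifferentiableAt ℂ N (ψ (M z)) := by
        apply DifferentiableAt.div
        · fun_prop
        · fun_prop
        · exact hNden _ (hb _ hMz)
      exact (hNd.comp _ hψd).comp z hMd
    have hgmaps : Set.MapsTo g (ball (0:ℂ) 1) (ball (g 0) 1) := by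
      intro z hz
      have hMz := hMmaps z hz
      rw [mem_ball, Complex.dist_eq, sub_zero] at hMz
      have hψMz : ‖ψ (M z)‖ < 1 := hmax _ (by simpa [unitDisk] using hMz)
      have hg0 : g 0 = 0 := by
        rw [hg, hM, hN]
        simp [← hbdef]
      rw [hg0, mem_ball, Complex.dist_eq, sub_zero]
      exact hNmaps _ hψMz
    have hkey := Complex.norm_deriv_le_div_of_mapsTo_ball hdg (hgmaps.mono_right ball_subset_closedBall) (one_pos)
    -- now compute deriv g 0
    have hM0 : M 0 = a := by rw [hM]; simp
    have hMder : HasDerivAt M (1 - a * (starRingEnd ℂ) a) 0 := by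
      have h1 : HasDerivAt (fun z : ℂ => z + a) 1 0 := by
        simpa using (hasDerivAt_id (0:ℂ)).add_const a
      have h2 : HasDerivAt (fun z : ℂ => 1 + (starRingEnd ℂ) a * z) ((starRingEnd ℂ) a) 0 := by
        simpa using ((hasDerivAt_id (0:ℂ)).const_mul ((starRingEnd ℂ) a)).const_add 1
      have h3 : (1 + (starRingEnd ℂ) a * (0:ℂ)) ≠ 0 := by simp
      have := h1.div h2 h3
      refine this.congr_deriv ?_
      field_simp
      ring
    have hψder : HasDerivAt ψ (deriv ψ a) a := (hψ a ha).differentiableAt.hasDerivAt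
    have hNder : HasDerivAt N ((1 - (starRingEnd ℂ) b * b)⁻¹) b := by
      have h1 : HasDerivAt (fun w : ℂ => w - b) 1 b := by
        simpa using (hasDerivAt_id b).sub_const b
      have h2 : HasDerivAt (fun w : ℂ => 1 - (starRingEnd ℂ) b * w) (-(starRingEnd ℂ) b) b := by
        simpa using ((hasDerivAt_id b).const_mul ((starRingEnd ℂ) b)).const_sub 1
      have h3 : (1 - (starRingEnd ℂ) b * b) ≠ 0 := hNden b (hb a ha)
      have := h1.div h2 h3
      refine this.congr_deriv ?_
      field_simp
      ring
    have hcomp1 : HasDerivAt (fun z => ψ (M z)) (deriv ψ a * (1 - a * (starRingEnd ℂ) a)) 0 := by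
      exact HasDerivAt.comp (0:ℂ) (by rw [hM0]; exact hψder) hMder
    have hcomp2 : HasDerivAt g
        ((1 - (starRingEnd ℂ) b * b)⁻¹ * (deriv ψ a * (1 - a * (starRingEnd ℂ) a))) 0 := by
      exact HasDerivAt.comp (0:ℂ) (by rw [show M 0 = a from hM0]; exact hNder) hcomp1
    have hderiv_g : deriv g 0 = (1 - (starRingEnd ℂ) b * b)⁻¹ *
        (deriv ψ a * (1 - a * (starRingEnd ℂ) a)) := hcomp2.deriv
    rw [hderiv_g] at hkey
    have hnb : Complex.normSq b < 1 := by rw [← Complex.sq_norm]; nlinarith [norm_nonneg b]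
    have hnA : Complex.normSq a < 1 := by rw [← Complex.sq_norm]; nlinarith [norm_nonneg a]
    have e1 : (1 : ℂ) - (starRingEnd ℂ) b * b = ((1 - Complex.normSq b : ℝ) : ℂ) := by
      rw [mul_comm, Complex.mul_conj]; push_cast; ring
    have e2 : (1 : ℂ) - a * (starRingEnd ℂ) a = ((1 - Complex.normSq a : ℝ) : ℂ) := by
      rw [Complex.mul_conj]; push_cast; ring
    rw [e1, e2, norm_mul, norm_mul, norm_inv, Complex.norm_real,
      Complex.norm_real, Real.norm_eq_abs, Real.norm_eq_abs, _root_.abs_of_nonneg (by linarith : (0:ℝ) ≤ 1 - Complex.normSq b),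
      _root_.abs_of_nonneg (by linarith : (0:ℝ) ≤ 1 - Complex.normSq a)] at hkey
    have hb2 : Complex.normSq b = ‖b‖ ^ 2 := (Complex.sq_norm b).symm
    have ha2 : Complex.normSq a = ‖a‖ ^ 2 := (Complex.sq_norm a).symm
    rw [div_one] at hkey
    rw [inv_mul_le_iff₀ (by linarith)] at hkey
    rw [← hb2, ← ha2]
    linarith [hkey]

/-- `dslope` at `0` preserves analyticity on the unit disk. -/
lemma analyticOnNhd_dslope {g : ℂ → ℂ} (hg : AnalyticOnNhd ℂ g unitDisk) :
    AnalyticOnNhd ℂ (dslope g 0) unitDisk := by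
  intro z hz
  rcases eq_or_ne z 0 with rfl | hzne
  · obtain ⟨q, hq⟩ := hg 0 hz
    exact hq.has_fpower_series_dslope_fslope.analyticAt
  · have h1 : AnalyticAt ℂ (fun w : ℂ => (w - 0)⁻¹ • (g w - g 0)) z := by
      apply AnalyticAt.fun_smul
      · exact ((analyticAt_id.sub analyticAt_const).inv (by simpa using hzne))
      · exact (hg z hz).sub analyticAt_const
    apply h1.congr
    have hev : ∀ᶠ w in nhds z, w ≠ 0 := eventually_ne_nhds hzne
    filter_upwards [hev] with w hw
    rw [dslope_of_ne _ hw, slope_def_field]; simp [smul_eq_mul, div_eq_inv_mul]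

/-- Factor out `z^m` from an analytic function whose first `m` Taylor
coefficients at `0` vanish. -/
lemma factor_pow : ∀ (m : ℕ) (g : ℂ → ℂ) (q : FormalMultilinearSeries ℂ ℂ ℂ),
    AnalyticOnNhd ℂ g unitDisk → HasFPowerSeriesAt g q 0 → (∀ k, k < m → q.coeff k = 0) →
    ∃ φ : ℂ → ℂ, AnalyticOnNhd ℂ φ unitDisk ∧ ∀ z ∈ unitDisk, g z = z ^ m * φ z := by
  intro m
  induction m with
  | zero => exact fun g q hg _ _ => ⟨g, hg, fun z _ => by simp⟩
  | succ m ih =>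
    intro g q hg hq hc
    have hg0 : g 0 = 0 := by
      have h1 : q.coeff 0 = g 0 := hq.coeff_zero 1
      rw [← h1, hc 0 (Nat.succ_pos m)]
    have hg1 : AnalyticOnNhd ℂ (dslope g 0) unitDisk := analyticOnNhd_dslope hg
    have hq1 : HasFPowerSeriesAt (dslope g 0) q.fslope 0 := hq.has_fpower_series_dslope_fslope
    have hc1 : ∀ k, k < m → q.fslope.coeff k = 0 := by
      intro k hk
      rw [FormalMultilinearSeries.coeff_fslope]
      exact hc (k+1) (by omega)
    obtain ⟨φ, hφ, hfac⟩ := ih (dslope g 0) q.fslope hg1 hq1 hc1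
    refine ⟨φ, hφ, fun z hz => ?_⟩
    rcases eq_or_ne z 0 with rfl | hzne
    · simp [hg0]
    · have h1 : dslope g 0 z = z ^ m * φ z := hfac z hz
      have h2 : dslope g 0 z = (g z - g 0) / (z - 0) := by
        rw [dslope_of_ne _ hzne, slope_def_field]
      rw [hg0, sub_zero, sub_zero] at h2
      rw [h2] at h1
      field_simp at h1
      rw [h1]; ring


/-- `S*_{ρ,n}`-radius for the class `S_n = {f ∈ 𝒜_n : Re (f z / z) > 0}`:
for `|z| < (arcsinh 1 / (n + √(n² + (arcsinh 1)²)))^(1/n)`, one has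
`z f'(z)/f(z) ∈ Ω_ρ`. -/
theorem radius_Sn (n : ℕ) (hn : 1 ≤ n) (f : ℂ → ℂ) (hf : classA n f)
    (hre : ∀ z ∈ unitDisk, z ≠ 0 → 0 < (f z / z).re) :
    ∀ z : ℂ, 0 < ‖z‖ →
      ‖z‖ <
        (Real.arsinh 1 / ((n : ℝ) + Real.sqrt ((n : ℝ) ^ 2 + Real.arsinh 1 ^ 2))) ^
          ((1 : ℝ) / (n : ℝ)) →
      f z ≠ 0 ∧ z * deriv f z / f z ∈ OmegaRho := by
  obtain ⟨hfa, hf0, hf1, hfk⟩ := hf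
  set p : ℂ → ℂ := dslope f 0 with hpdef
  have hpa : AnalyticOnNhd ℂ p unitDisk := analyticOnNhd_dslope hfa
  have hp0 : p 0 = 1 := by rw [hpdef, dslope_same, hf1]
  have hfzp : ∀ z ∈ unitDisk, f z = z * p z := by
    intro z hz
    rcases eq_or_ne z 0 with rfl | hzne
    · simp [hf0]
    · rw [hpdef, dslope_of_ne _ hzne, slope_def_field, hf0, sub_zero, sub_zero]
      field_simp
  have hpre : ∀ z ∈ unitDisk, 0 < (p z).re := by
    intro z hz
    rcases eq_or_ne z 0 with rfl | hzne
    · rw [hp0]; norm_num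
    · have h1 := hre z hz hzne
      have h2 : f z / z = p z := by rw [hfzp z hz]; field_simp
      rwa [h2] at h1
  have hpne : ∀ z ∈ unitDisk, p z ≠ 0 := by
    intro z hz h
    have := hpre z hz
    rw [h] at this; simp at this
  have hp1 : ∀ z ∈ unitDisk, p z + 1 ≠ 0 := by
    intro z hz h
    have h2 : (p z + 1).re = (p z).re + 1 := by simp
    rw [h] at h2
    simp only [Complex.zero_re] at h2
    have := hpre z hz; linarith
  -- power series of f at 0 and its coefficients
  obtain ⟨q, hq⟩ := hfa 0 zero_mem_unitDisk
  have hcoeff : ∀ k : ℕ, 2 ≤ k → k ≤ n → q.coeff k = 0 := by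
    intro k h2 hk
    obtain ⟨rq, hqb⟩ := hq
    have h3 := hqb.factorial_smul (y := (1:ℂ)) k
    have h4 : iteratedFDeriv ℂ k f 0 (fun _ => 1) = iteratedDeriv k f 0 :=
      (iteratedDeriv_eq_iteratedFDeriv).symm
    rw [h4, hfk k h2 hk] at h3
    have h5 : (Nat.factorial k : ℂ) * q.coeff k = 0 := by
      rw [← h3, nsmul_eq_mul]
      rfl
    rcases mul_eq_zero.mp h5 with h | h
    · exact absurd h (by exact_mod_cast Nat.factorial_ne_zero k)
    · exact h
  have hq1 : q.coeff 1 = 1 := by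
    have h := hq.deriv
    rw [hf1] at h
    exact h.symm
  -- series of p - 1 and factorization
  have hp_series : HasFPowerSeriesAt p q.fslope 0 := hq.has_fpower_series_dslope_fslope
  have hg_series : HasFPowerSeriesAt (fun z => p z - 1)
      (q.fslope - constFormalMultilinearSeries ℂ ℂ (1 : ℂ)) 0 :=
    hp_series.sub hasFPowerSeriesAt_const
  have hgc : ∀ k, k < n → (q.fslope - constFormalMultilinearSeries ℂ ℂ (1 : ℂ)).coeff k = 0 := by
    intro k hk
    rcases eq_or_ne k 0 with rfl | hkne
    · have h1 := hg_series.coeff_zero 1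
      rw [hp0, sub_self] at h1
      exact h1
    · have h1 : (q.fslope - constFormalMultilinearSeries ℂ ℂ (1 : ℂ)).coeff k
          = q.fslope.coeff k - (constFormalMultilinearSeries ℂ ℂ (1 : ℂ)).coeff k := rfl
      rw [h1, FormalMultilinearSeries.coeff_fslope,
        hcoeff (k+1) (by omega) (by omega)]
      have h2 : (constFormalMultilinearSeries ℂ ℂ (1 : ℂ)).coeff k = 0 := by
        rw [FormalMultilinearSeries.coeff, constFormalMultilinearSeries_apply_of_nonzero hkne]
        simp
      rw [h2]; ring
  have hga : AnalyticOnNhd ℂ (fun z => p z - 1) unitDisk :=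
    fun z hz => (hpa z hz).sub analyticAt_const
  obtain ⟨φ, hφa, hfac⟩ := factor_pow n _ _ hga hg_series hgc
  -- ψ and O
  obtain ⟨ψ, hψa, hψeq⟩ : ∃ ψ : ℂ → ℂ, AnalyticOnNhd ℂ ψ unitDisk ∧
      ∀ w ∈ unitDisk, w ^ n * ψ w = (p w - 1) / (p w + 1) := by
    refine ⟨fun w => φ w / (p w + 1),
      fun w hw => (hφa w hw).div ((hpa w hw).add analyticAt_const) (hp1 w hw),
      fun w hw => ?_⟩
    rw [← mul_div_assoc, ← hfac w hw]
  set O : ℂ → ℂ := fun w => w ^ n * ψ w with hOdef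
  have hOeq : ∀ z ∈ unitDisk, O z = (p z - 1) / (p z + 1) := fun z hz => hψeq z hz
  have hOlt : ∀ z ∈ unitDisk, ‖O z‖ < 1 := by
    intro z hz
    rw [hOeq z hz, norm_div, div_lt_one (norm_pos_iff.mpr (hp1 z hz))]
    apply abs_lt_abs_of_normSq
    have h1 : Complex.normSq (p z + 1) - Complex.normSq (p z - 1) = 4 * (p z).re := by
      simp only [Complex.normSq_apply, Complex.add_re, Complex.add_im, Complex.sub_re,
        Complex.sub_im, Complex.one_re, Complex.one_im]
      ring
    have h2 := hpre z hz
    linarith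
  have hψle : ∀ a ∈ unitDisk, ‖ψ a‖ ≤ 1 := by
    intro a ha
    exact psi_le_one hψa (fun z hz => hOlt z hz) ha
  -- main part
  intro z hz0 hzR
  obtain ⟨hr1, hrad⟩ := radius_bound n hn (‖z‖) hz0 hzR
  have hzD : z ∈ unitDisk := hr1
  have hzne : z ≠ 0 := by
    intro h; rw [h] at hz0; simp at hz0
  have hfz : f z ≠ 0 := by
    rw [hfzp z hzD]; exact mul_ne_zero hzne (hpne z hzD)
  refine ⟨hfz, ?_⟩
  have hpd : DifferentiableAt ℂ p z := (hpa z hzD).differentiableAt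
  have hfderiv : deriv f z = p z + z * deriv p z := by
    have hev : f =ᶠ[nhds z] fun w => w * p w :=
      Filter.eventuallyEq_of_mem (isOpen_unitDisk.mem_nhds hzD) hfzp
    rw [hev.deriv_eq, deriv_fun_mul (c := fun w => w) differentiableAt_id hpd]
    simp
  have hw_eq : z * deriv f z / f z = 1 + z * deriv p z / p z := by
    rw [hfderiv, hfzp z hzD]
    field_simp [hzne, hpne z hzD]
  have hψd : DifferentiableAt ℂ ψ z := (hψa z hzD).differentiableAt
  set dO : ℂ := (n:ℂ) * z^(n-1) * ψ z + z^n * deriv ψ z with hdO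
  have hOder : HasDerivAt O dO z := by
    rw [hdO]
    exact (hasDerivAt_pow n z).mul hψd.hasDerivAt
  have h1mO : (1:ℂ) - O z ≠ 0 := by
    intro h
    have h2 := hOlt z hzD
    rw [sub_eq_zero] at h
    rw [← h] at h2
    simp at h2
  have h1pO : (1:ℂ) + O z ≠ 0 := by
    intro h
    have h2 := hOlt z hzD
    have h3 : O z = -1 := by linear_combination h
    rw [h3] at h2
    simp at h2
  have hrel : ∀ w ∈ unitDisk, p w * (1 - O w) = 1 + O w := by
    intro w hw
    rw [hOeq w hw]
    field_simp [hp1 w hw]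
    ring
  -- derivative identity via local equality
  have hLder : HasDerivAt (fun w => p w * (1 - O w))
      (deriv p z * (1 - O z) + p z * (-dO)) z := by
    exact (hpd.hasDerivAt).mul (hOder.const_sub 1)
  have hRder : HasDerivAt (fun w => (1:ℂ) + O w) dO z := hOder.const_add 1
  have hev2 : (fun w => p w * (1 - O w)) =ᶠ[nhds z] fun w => (1:ℂ) + O w :=
    Filter.eventuallyEq_of_mem (isOpen_unitDisk.mem_nhds hzD) hrel
  have hderiv_eq : deriv p z * (1 - O z) + p z * (-dO) = dO := by
    have h1 := hLder.deriv
    have h2 := hRder.deriv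
    rw [hev2.deriv_eq] at h1
    rw [h1] at h2
    exact h2
  have hw' : z * deriv p z / p z = 2 * (z * dO) / (1 - O z ^ 2) := by
    have hOsqne : (1:ℂ) - O z ^ 2 ≠ 0 := by
      have : (1:ℂ) - O z ^ 2 = (1 - O z) * (1 + O z) := by ring
      rw [this]; exact mul_ne_zero h1mO h1pO
    have hc2 := hrel z hzD
    rw [div_eq_div_iff (hpne z hzD) hOsqne]
    linear_combination (z * (1 + O z)) * hderiv_eq - (z * dO) * hc2
  -- norm estimates
  set r : ℝ := ‖z‖ with hrdef
  set t : ℝ := ‖ψ z‖ with htdef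
  set u : ℝ := ‖deriv ψ z‖ with hudef
  have ht1 : t ≤ 1 := hψle z hzD
  have ht0 : 0 ≤ t := norm_nonneg _
  have hu0 : 0 ≤ u := norm_nonneg _
  have hsp := schwarz_pick hψa hψle hzD
  have hu : u * (1 - r^2) ≤ 1 - t^2 := by
    rw [hudef, hrdef, htdef]; exact hsp
  have hOabs : ‖O z‖ = r^n * t := by
    rw [hOdef]
    simp only [norm_mul, norm_pow]; rfl
  have hr2nt : ‖O z‖ ^ 2 = r^(2*n) * t^2 := by
    rw [hOabs, mul_pow, ← pow_mul, mul_comm n 2]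
  have hdenom : (0:ℝ) < 1 - r^(2*n) * t^2 := by
    have h1 : r^(2*n) < 1 := pow_lt_one₀ (norm_nonneg z) hr1 (by omega)
    have h2 : r^(2*n) * t^2 ≤ r^(2*n) * 1 := by
      apply mul_le_mul_of_nonneg_left _ (pow_nonneg (norm_nonneg z) _)
      nlinarith
    nlinarith
  have habs_denom : 1 - r^(2*n) * t^2 ≤ ‖1 - O z ^ 2‖ := by
    have h1 : ‖(1:ℂ)‖ ≤ ‖1 - O z^2‖ + ‖O z ^ 2‖ := by
      have := norm_add_le (1 - O z^2) (O z ^ 2)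
      simpa using this
    rw [norm_pow] at h1
    have h2 : ‖O z‖ ^ 2 = r^(2*n)*t^2 := hr2nt
    simp only [norm_one] at h1
    linarith [h2 ▸ h1]
  have habs_num : ‖z * dO‖ ≤ n * r^n * t + r^(n+1) * u := by
    rw [norm_mul]
    have h1 : ‖dO‖ ≤ n * r^(n-1) * t + r^n * u := by
      rw [hdO]
      calc ‖(n:ℂ) * z^(n-1) * ψ z + z^n * deriv ψ z‖
          ≤ ‖(n:ℂ) * z^(n-1) * ψ z‖ + ‖z^n * deriv ψ z‖ :=
            norm_add_le _ _
        _ = n * r^(n-1) * t + r^n * u := by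
            simp only [norm_mul, norm_pow, Complex.norm_natCast]; rfl
    calc ‖z‖ * ‖dO‖ ≤ r * (n * r^(n-1) * t + r^n * u) := by
          apply mul_le_mul_of_nonneg_left h1 (norm_nonneg z)
      _ = n * (r^(n-1) * r) * t + r^(n+1) * u := by ring
      _ = n * r^n * t + r^(n+1) * u := by
          have hpow : r^(n-1) * r = r^n := by
            rw [← pow_succ]
            congr 1
            omega
          rw [hpow]
  have hfinal : ‖z * deriv p z / p z‖ < Real.arsinh 1 := by
    rw [hw']
    rw [norm_div, norm_mul]
    have hnum : ‖(2:ℂ)‖ * ‖z * dO‖ ≤ 2 * (n * r^n * t + r^(n+1) * u) := by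
      rw [Complex.norm_two]
      linarith [habs_num]
    have h0 : (0:ℝ) < ‖1 - O z ^ 2‖ := lt_of_lt_of_le hdenom habs_denom
    calc ‖(2:ℂ)‖ * ‖z * dO‖ / ‖1 - O z ^ 2‖
        ≤ (2 * (n * r^n * t + r^(n+1) * u)) / (1 - r^(2*n) * t^2) := by
          apply div_le_div₀ (by positivity) hnum hdenom habs_denom
      _ = 2 * r^n * ((n:ℝ) * t + r * u) / (1 - r^(2*n) * t^2) := by
          rw [show (2:ℝ) * (n * r^n * t + r^(n+1)*u) = 2 * r^n * ((n:ℝ)*t + r*u) by ring]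
      _ ≤ 2 * n * r^n / (1 - r^(2*n)) := by
          exact real_bound n hn r t u hz0 hr1 ht0 ht1 hu0 hu
      _ < Real.arsinh 1 := hrad
  rw [hw_eq]
  exact mem_OmegaRho_of_abs_lt hfinal
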